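/- If W_{G'} = (1/2)((I+R_G)/2 + δJ_𝓗 + (1−δ)B_𝓗) where R_G is symmetric (a permutation matrix of an involution), J_𝓗 and B_𝓗 are symmetric with η₁(B_𝓗) ≤ 1, and all terms are contractions in spectral norm, then W_{G'}³ can be written as (1 − δ²/8)·B + (δ²/8)·P for some symmetric matrix B with η₁(B) ≤ 1, where P := (1/2)J_𝓗(I + R_G)J_𝓗. Consequently η_j(W_{G'}³) ≤ 1 − δ²/8 + (δ²/8)·η_j(P) for all j. -/

import Mathlib

open Matrix
set_option maxHeartbeats 1000000
open scoped Matrix.Norms.L2Operator RealInnerProductSpace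

lemma l2_opNorm_diagonal_le {n : ℕ} (v : Fin n → ℝ) {c : ℝ} (hc : 0 ≤ c)
    (h : ∀ i, |v i| ≤ c) : ‖Matrix.diagonal v‖ ≤ c := by
  rw [Matrix.l2_opNorm_def]
  refine ContinuousLinearMap.opNorm_le_bound _ hc fun x => ?_
  show ‖(Matrix.toEuclideanLin (Matrix.diagonal v) x : EuclideanSpace ℝ (Fin n))‖ ≤ c * ‖x‖
  rw [EuclideanSpace.norm_eq, EuclideanSpace.norm_eq]
  have key : ∑ i, ‖(Matrix.toEuclideanLin (Matrix.diagonal v) x : EuclideanSpace ℝ (Fin n)) i‖ ^ 2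
      ≤ c ^ 2 * ∑ i, ‖x i‖ ^ 2 := by
    rw [Finset.mul_sum]
    refine Finset.sum_le_sum fun i _ => ?_
    have : (Matrix.toEuclideanLin (Matrix.diagonal v) x : EuclideanSpace ℝ (Fin n)) i
        = v i * x i := diagonal_dotProduct v _ i
    rw [this]
    have h1 := h i
    have h2 : |x i| ≤ |x i| := le_rfl
    simp only [Real.norm_eq_abs]
    rw [abs_mul, mul_pow]
    exact mul_le_mul_of_nonneg_right (pow_le_pow_left₀ (abs_nonneg _) h1 2) (sq_nonneg _)
  calc Real.sqrt (∑ i, ‖(Matrix.toEuclideanLin (Matrix.diagonal v) x : EuclideanSpace ℝ (Fin n)) i‖ ^ 2)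
      ≤ Real.sqrt (c ^ 2 * ∑ i, ‖x i‖ ^ 2) := Real.sqrt_le_sqrt key
    _ = c * Real.sqrt (∑ i, ‖x i‖ ^ 2) := by
        rw [Real.sqrt_mul (sq_nonneg c), Real.sqrt_sq hc]

lemma abs_eigenvalue_le_l2_opNorm {n : ℕ} {A : Matrix (Fin n) (Fin n) ℝ}
    (hA : A.IsHermitian) (i : Fin n) : |hA.eigenvalues i| ≤ ‖A‖ := by
  have hv := hA.mulVec_eigenvectorBasis i
  have h1 : ‖hA.eigenvectorBasis i‖ = 1 := hA.eigenvectorBasis.orthonormal.1 i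
  have hle := Matrix.l2_opNorm_mulVec A (hA.eigenvectorBasis i)
  have h2 : ((EuclideanSpace.equiv (Fin n) ℝ).symm (A *ᵥ ⇑(hA.eigenvectorBasis i)))
      = hA.eigenvalues i • hA.eigenvectorBasis i := congrArg _ hv
  have e : ((EuclideanSpace.equiv (Fin n) ℝ).symm (A *ᵥ hA.eigenvectorBasis i))
      = hA.eigenvalues i • hA.eigenvectorBasis i := h2
  rw [e, norm_smul, Real.norm_eq_abs, h1] at hle
  simpa using hle

lemma l2_opNorm_le_of_eigenvalues {n : ℕ} {A : Matrix (Fin n) (Fin n) ℝ}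
    (hA : A.IsHermitian) {c : ℝ} (hc : 0 ≤ c)
    (h : ∀ i, |hA.eigenvalues i| ≤ c) : ‖A‖ ≤ c := by
  conv_lhs => rw [hA.spectral_theorem, Unitary.conjStarAlgAut_apply]
  rw [CStarRing.norm_mul_mem_unitary _ (Unitary.star_mem hA.eigenvectorUnitary.2),
    CStarRing.norm_mem_unitary_mul _ hA.eigenvectorUnitary.2]
  refine l2_opNorm_diagonal_le _ hc fun i => ?_
  simpa using h i


/-- `f (Tuple.sort f (Fin.rev j))` is the `j`-th largest value of `f`. -/
noncomputable def kthLargest {n : ℕ} (f : Fin n → ℝ) (j : Fin n) : ℝ :=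
  f (Tuple.sort f (Fin.rev j))

lemma toEuclideanLin_eigen {n : ℕ} {A : Matrix (Fin n) (Fin n) ℝ} (hA : A.IsHermitian)
    (i : Fin n) : Matrix.toEuclideanLin A (hA.eigenvectorBasis i)
      = hA.eigenvalues i • hA.eigenvectorBasis i :=
  congrArg (WithLp.equiv 2 ((Fin n) → ℝ)).symm (hA.mulVec_eigenvectorBasis i)

lemma quad_rep {n : ℕ} {A : Matrix (Fin n) (Fin n) ℝ} (hA : A.IsHermitian)
    (s : Finset (Fin n)) {x : EuclideanSpace ℝ (Fin n)}
    (hx : x ∈ Submodule.span ℝ (Set.range (fun i : s => hA.eigenvectorBasis i))) :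
    ∃ f : s → ℝ, ‖x‖ ^ 2 = ∑ i, f i * f i ∧
      ⟪x, Matrix.toEuclideanLin A x⟫ = ∑ i : s, hA.eigenvalues i.1 * (f i * f i) := by
  classical
  obtain ⟨f, hf⟩ := (Submodule.mem_span_range_iff_exists_fun ℝ).mp hx
  have horth := orthonormal_iff_ite.mp hA.eigenvectorBasis.orthonormal
  have key : ∀ g : s → ℝ,
      ⟪x, ∑ i : s, g i • (hA.eigenvectorBasis i : EuclideanSpace ℝ (Fin n))⟫
        = ∑ i : s, f i * g i := by
    intro g
    rw [← hf, sum_inner]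
    simp_rw [inner_sum, real_inner_smul_left, real_inner_smul_right, horth]
    rw [Finset.sum_comm]
    refine Finset.sum_congr rfl fun i _ => ?_
    rw [Finset.sum_eq_single i]
    · simp
    · intro k _ hk
      simp only [mul_ite, mul_one, mul_zero, ite_eq_right_iff]
      exact fun h => absurd (Subtype.ext h) hk
    · simp
  refine ⟨f, ?_, ?_⟩
  · have := key f
    rw [hf] at this
    rw [← real_inner_self_eq_norm_sq, this]
  · have hAx : Matrix.toEuclideanLin A x
        = ∑ i : s, (hA.eigenvalues i * f i) • hA.eigenvectorBasis i := by
      rw [← hf, map_sum]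
      refine Finset.sum_congr rfl fun i _ => ?_
      rw [LinearMap.map_smul, toEuclideanLin_eigen hA i.1, smul_smul, mul_comm]
    rw [hAx, key]
    exact Finset.sum_congr rfl fun i _ => by ring

lemma weyl_bound {n : ℕ} {A C M : Matrix (Fin n) (Fin n) ℝ}
    (hA : A.IsHermitian) (hM : M.IsHermitian) {t c : ℝ} (ht : 0 ≤ t)
    (hMAC : M = t • A + C) (hC : ‖C‖ ≤ c) (j : Fin n) :
    kthLargest hM.eigenvalues j ≤ t * kthLargest hA.eigenvalues j + c := by
  classical
  set μ := hM.eigenvalues with hμ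
  set α := hA.eigenvalues with hα
  set σ := Tuple.sort μ with hσ
  set τ := Tuple.sort α with hτ
  set s₁ : Finset (Fin n) := (Finset.Ici (Fin.rev j)).image σ with hs₁
  set s₂ : Finset (Fin n) := (Finset.Iic (Fin.rev j)).image τ with hs₂
  set V := Submodule.span ℝ (Set.range (fun i : s₁ => hM.eigenvectorBasis i)) with hV
  set W := Submodule.span ℝ (Set.range (fun i : s₂ => hA.eigenvectorBasis i)) with hW
  have hjlt : (Fin.rev j).val < n := (Fin.rev j).isLt
  have hc₁ : s₁.card = n - (Fin.rev j).val := by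
    rw [hs₁, Finset.card_image_of_injective _ σ.injective, Fin.card_Ici]
  have hc₂ : s₂.card = (Fin.rev j).val + 1 := by
    rw [hs₂, Finset.card_image_of_injective _ τ.injective, Fin.card_Iic]
  have hdV : Module.finrank ℝ V = s₁.card := by
    have h := finrank_span_eq_card ((hM.eigenvectorBasis.orthonormal.comp
      ((↑) : s₁ → Fin n) Subtype.coe_injective).linearIndependent)
    rw [Fintype.card_coe] at h
    exact h
  have hdW : Module.finrank ℝ W = s₂.card := by
    have h := finrank_span_eq_card ((hA.eigenvectorBasis.orthonormal.comp
      ((↑) : s₂ → Fin n) Subtype.coe_injective).linearIndependent)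
    rw [Fintype.card_coe] at h
    exact h
  have hsup : Module.finrank ℝ ↥(V ⊔ W) ≤ n := by
    refine le_trans (Submodule.finrank_le _) ?_
    simp [finrank_euclideanSpace]
  have hinf : 0 < Module.finrank ℝ ↥(V ⊓ W) := by
    have := Submodule.finrank_sup_add_finrank_inf_eq V W
    omega
  haveI : Nontrivial ↥(V ⊓ W) := Module.finrank_pos_iff.mp hinf
  obtain ⟨⟨x, hxmem⟩, hxne⟩ := exists_ne (0 : ↥(V ⊓ W))
  have hx0 : x ≠ 0 := fun h => hxne (Subtype.ext (by simpa using h))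
  obtain ⟨f, hfn, hfq⟩ := quad_rep hM s₁ hxmem.1
  obtain ⟨g, hgn, hgq⟩ := quad_rep hA s₂ hxmem.2
  have hkμ : kthLargest μ j = μ (σ (Fin.rev j)) := rfl
  have hkα : kthLargest α j = α (τ (Fin.rev j)) := rfl
  have hμbound : kthLargest μ j * ‖x‖ ^ 2 ≤ ⟪x, Matrix.toEuclideanLin M x⟫ := by
    rw [hfq, hfn, Finset.mul_sum, hkμ]
    refine Finset.sum_le_sum fun i _ => ?_
    obtain ⟨k, hk, hki⟩ := Finset.mem_image.mp i.2
    have hmono : μ (σ (Fin.rev j)) ≤ μ i.1 := by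
      rw [← hki]; exact Tuple.monotone_sort μ (Finset.mem_Ici.mp hk)
    nlinarith [mul_self_nonneg (f i)]
  have hαbound : ⟪x, Matrix.toEuclideanLin A x⟫ ≤ kthLargest α j * ‖x‖ ^ 2 := by
    rw [hgq, hgn, Finset.mul_sum, hkα]
    refine Finset.sum_le_sum fun i _ => ?_
    obtain ⟨k, hk, hki⟩ := Finset.mem_image.mp i.2
    have hmono : α i.1 ≤ α (τ (Fin.rev j)) := by
      rw [← hki]; exact Tuple.monotone_sort α (Finset.mem_Iic.mp hk)
    nlinarith [mul_self_nonneg (g i)]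
  have hCbound : ⟪x, Matrix.toEuclideanLin C x⟫ ≤ c * ‖x‖ ^ 2 := by
    have h1 : ⟪x, Matrix.toEuclideanLin C x⟫ ≤ ‖x‖ * ‖Matrix.toEuclideanLin C x‖ :=
      real_inner_le_norm _ _
    have h2 : ‖Matrix.toEuclideanLin C x‖ ≤ ‖C‖ * ‖x‖ := Matrix.l2_opNorm_mulVec C x
    have h3 : (0:ℝ) ≤ ‖x‖ := norm_nonneg x
    have h4 : (0:ℝ) ≤ ‖C‖ := norm_nonneg C
    nlinarith
  have hsplit : ⟪x, Matrix.toEuclideanLin M x⟫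
      = t * ⟪x, Matrix.toEuclideanLin A x⟫ + ⟪x, Matrix.toEuclideanLin C x⟫ := by
    rw [hMAC]
    simp only [map_add, _root_.map_smul, LinearMap.add_apply, LinearMap.smul_apply,
      inner_add_right, real_inner_smul_right]
  have hx2 : (0:ℝ) < ‖x‖ ^ 2 := pow_pos (norm_pos_iff.mpr hx0) 2
  have final : kthLargest μ j * ‖x‖ ^ 2 ≤ (t * kthLargest α j + c) * ‖x‖ ^ 2 := by
    nlinarith [mul_le_mul_of_nonneg_left hαbound ht]
  exact le_of_mul_le_mul_right final hx2


lemma norm_triple {n : ℕ} (A₁ A₂ A₃ : Matrix (Fin n) (Fin n) ℝ) {a b c : ℝ}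
    (h1 : ‖A₁‖ ≤ a) (h2 : ‖A₂‖ ≤ b) (h3 : ‖A₃‖ ≤ c) : ‖A₁ * A₂ * A₃‖ ≤ a * b * c := by
  have u1 := Matrix.l2_opNorm_mul A₁ A₂
  have u2 := Matrix.l2_opNorm_mul (A₁ * A₂) A₃
  have n1 := norm_nonneg A₁; have n2 := norm_nonneg A₂; have n3 := norm_nonneg A₃
  have n12 := norm_nonneg (A₁ * A₂)
  calc ‖A₁ * A₂ * A₃‖ ≤ ‖A₁ * A₂‖ * ‖A₃‖ := u2
    _ ≤ (‖A₁‖ * ‖A₂‖) * ‖A₃‖ := mul_le_mul_of_nonneg_right u1 n3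
    _ ≤ a * b * c :=
        mul_le_mul (mul_le_mul h1 h2 n2 (n1.trans h1)) h3 n3
          (mul_nonneg (n1.trans h1) (n2.trans h2))

/-- If `W' = (1/2)((I+R)/2 + δJ + (1−δ)B)` where `R` is symmetric with `R² = I`
(the permutation matrix of an involution), `J` and `B` are symmetric contractions
in spectral norm (all eigenvalues in `[-1,1]`, in particular `η₁(B) ≤ 1`), and
`0 ≤ δ < 1`, then `W'³ = (1 − δ²/8)·B' + (δ²/8)·P` for some symmetric `B'` with
`η₁(B') ≤ 1`, where `P := (1/2)J(I+R)J`.  Consequently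
`η_j(W'³) ≤ 1 − δ²/8 + (δ²/8)·η_j(P)` for all `j`. -/
theorem cube_decomposition_and_eigenvalue_bound
    {n : ℕ} (R J B W' P : Matrix (Fin n) (Fin n) ℝ)
    (hRsymm : R.IsHermitian) (hRinv : R * R = 1)
    (hJ : J.IsHermitian) (hB : B.IsHermitian)
    (hJnorm : ∀ i, |hJ.eigenvalues i| ≤ 1)
    (hBnorm : ∀ i, |hB.eigenvalues i| ≤ 1)
    (hBtop : ∀ i, hB.eigenvalues i ≤ 1)
    (δ : ℝ) (hδ0 : 0 ≤ δ) (hδ1 : δ < 1)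
    (hW' : W' = (2 : ℝ)⁻¹ •
      ((2 : ℝ)⁻¹ • ((1 : Matrix (Fin n) (Fin n) ℝ) + R) + δ • J + (1 - δ) • B))
    (hP : P = (2 : ℝ)⁻¹ • (J * ((1 : Matrix (Fin n) (Fin n) ℝ) + R) * J))
    (hW3 : (W' ^ 3).IsHermitian) (hPh : P.IsHermitian) :
    (∃ (B' : Matrix (Fin n) (Fin n) ℝ) (hB' : B'.IsHermitian),
      (∀ i, hB'.eigenvalues i ≤ 1) ∧
      W' ^ 3 = (1 - δ ^ 2 / 8) • B' + (δ ^ 2 / 8) • P) ∧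
    ∀ j : Fin n, kthLargest hW3.eigenvalues j
      ≤ 1 - δ ^ 2 / 8 + (δ ^ 2 / 8) * kthLargest hPh.eigenvalues j := by
  have hδ2 : δ ^ 2 < 1 := by nlinarith
  have hc : (0:ℝ) < 1 - δ ^ 2 / 8 := by nlinarith
  -- basic norm bounds
  have hone : ‖(1 : Matrix (Fin n) (Fin n) ℝ)‖ ≤ 1 := by
    rw [← Matrix.diagonal_one]
    exact l2_opNorm_diagonal_le _ zero_le_one (fun i => by simp)
  have hRn : ‖R‖ ≤ 1 := by
    have h1 : ‖R‖ * ‖R‖ = ‖(1 : Matrix (Fin n) (Fin n) ℝ)‖ := by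
      rw [← hRinv, ← Matrix.l2_opNorm_conjTranspose_mul_self R, hRsymm.eq]
    nlinarith [norm_nonneg R]
  have hJn : ‖J‖ ≤ 1 := l2_opNorm_le_of_eigenvalues hJ zero_le_one hJnorm
  have hBn : ‖B‖ ≤ 1 := l2_opNorm_le_of_eigenvalues hB zero_le_one hBnorm
  -- decomposition of W'
  set X : Matrix (Fin n) (Fin n) ℝ := (4:ℝ)⁻¹ • (1 + R) with hX
  set Y : Matrix (Fin n) (Fin n) ℝ := (δ/2) • J with hY
  set Z : Matrix (Fin n) (Fin n) ℝ := ((1-δ)/2) • B with hZ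
  have hS : W' = X + Y + Z := by rw [hW', hX, hY, hZ]; module
  have hXn : ‖X‖ ≤ 1/2 := by
    rw [hX, norm_smul, Real.norm_eq_abs]
    have := norm_add_le (1 : Matrix (Fin n) (Fin n) ℝ) R
    rw [abs_of_pos (by norm_num : (0:ℝ) < (4:ℝ)⁻¹)]
    nlinarith
  have hYn : ‖Y‖ ≤ δ/2 := by
    rw [hY, norm_smul, Real.norm_eq_abs, abs_of_nonneg (by linarith)]
    nlinarith [norm_nonneg J]
  have hZn : ‖Z‖ ≤ (1-δ)/2 := by
    rw [hZ, norm_smul, Real.norm_eq_abs, abs_of_nonneg (by linarith)]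
    nlinarith [norm_nonneg B]
  have hWn : ‖W'‖ ≤ 1 := by
    rw [hS]
    calc ‖X + Y + Z‖ ≤ ‖X + Y‖ + ‖Z‖ := norm_add_le _ _
      _ ≤ ‖X‖ + ‖Y‖ + ‖Z‖ := by linarith [norm_add_le X Y]
      _ ≤ 1 := by linarith
  have hexp : W' ^ 3 = X*W'*W' + Z*W'*W' + Y*Y*W' + Y*Z*W' + Y*X*X + Y*X*Z + Y*X*Y := by
    rw [hS]; noncomm_ring
  have hYXY : Y*X*Y = (δ^2/8) • P := by
    rw [hY, hX, hP]
    simp only [smul_mul_assoc, mul_smul_comm, smul_smul]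
    congr 1
    ring
  have hEexp : W' ^ 3 - (δ^2/8) • P
      = X*W'*W' + Z*W'*W' + Y*Y*W' + Y*Z*W' + Y*X*X + Y*X*Z := by
    rw [hexp, ← hYXY]; abel
  have hEnorm : ‖W' ^ 3 - (δ^2/8) • P‖ ≤ 1 - δ^2/8 := by
    rw [hEexp]
    have t1 := norm_triple X W' W' hXn hWn hWn
    have t2 := norm_triple Z W' W' hZn hWn hWn
    have t3 := norm_triple Y Y W' hYn hYn hWn
    have t4 := norm_triple Y Z W' hYn hZn hWn
    have t5 := norm_triple Y X X hYn hXn hXn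
    have t6 := norm_triple Y X Z hYn hXn hZn
    calc ‖X*W'*W' + Z*W'*W' + Y*Y*W' + Y*Z*W' + Y*X*X + Y*X*Z‖
        ≤ ‖X*W'*W' + Z*W'*W' + Y*Y*W' + Y*Z*W' + Y*X*X‖ + ‖Y*X*Z‖ := norm_add_le _ _
      _ ≤ ‖X*W'*W' + Z*W'*W' + Y*Y*W' + Y*Z*W'‖ + ‖Y*X*X‖ + ‖Y*X*Z‖ := by
          linarith [norm_add_le (X*W'*W' + Z*W'*W' + Y*Y*W' + Y*Z*W') (Y*X*X)]
      _ ≤ ‖X*W'*W' + Z*W'*W' + Y*Y*W'‖ + ‖Y*Z*W'‖ + ‖Y*X*X‖ + ‖Y*X*Z‖ := by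
          linarith [norm_add_le (X*W'*W' + Z*W'*W' + Y*Y*W') (Y*Z*W')]
      _ ≤ ‖X*W'*W' + Z*W'*W'‖ + ‖Y*Y*W'‖ + ‖Y*Z*W'‖ + ‖Y*X*X‖ + ‖Y*X*Z‖ := by
          linarith [norm_add_le (X*W'*W' + Z*W'*W') (Y*Y*W')]
      _ ≤ ‖X*W'*W'‖ + ‖Z*W'*W'‖ + ‖Y*Y*W'‖ + ‖Y*Z*W'‖ + ‖Y*X*X‖ + ‖Y*X*Z‖ := by
          linarith [norm_add_le (X*W'*W') (Z*W'*W')]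
      _ ≤ 1 - δ^2/8 := by nlinarith
  have hEh : (W' ^ 3 - (δ^2/8) • P).IsHermitian := by
    have : ((δ^2/8) • P).IsHermitian := by
      unfold Matrix.IsHermitian
      rw [Matrix.conjTranspose_smul, hPh.eq]
      simp
    exact hW3.sub this
  set B' : Matrix (Fin n) (Fin n) ℝ := (1 - δ^2/8)⁻¹ • (W' ^ 3 - (δ^2/8) • P) with hB'def
  have hB'h : B'.IsHermitian := by
    rw [hB'def]
    unfold Matrix.IsHermitian
    rw [Matrix.conjTranspose_smul, hEh.eq]
    simp
  have hB'n : ‖B'‖ ≤ 1 := by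
    rw [hB'def, norm_smul, Real.norm_eq_abs, abs_of_pos (inv_pos.mpr hc)]
    have h1 := mul_le_mul_of_nonneg_left hEnorm (le_of_lt (inv_pos.mpr hc))
    rw [inv_mul_cancel₀ hc.ne'] at h1
    exact h1
  have hδ28 : δ^2/8 = δ^2/8 := rfl
  constructor
  · refine ⟨B', hB'h, fun i => ?_, ?_⟩
    · have h := abs_eigenvalue_le_l2_opNorm hB'h i
      have := (abs_le.mp (h.trans hB'n)).2
      linarith
    · rw [hB'def, smul_smul, mul_inv_cancel₀ hc.ne', one_smul]
      abel
  · intro j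
    have hM : W' ^ 3 = (δ^2/8) • P + (W' ^ 3 - (δ^2/8) • P) := by abel
    have := weyl_bound hPh hW3 (by positivity) hM hEnorm j
    linarith
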